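/- Let 𝔤 be a finite-dimensional real Lie algebra (equipped with any norm; all norms are equivalent) and let σ : 𝔤 → 𝔤 be a Lie algebra automorphism. Then the set 𝔣ˢ = {v ∈ 𝔤 : σⁿ(v) → 0 as n → ∞} is a Lie subalgebra of 𝔤, and 𝔣ˢ is nilpotent as a Lie algebra. -/

import Mathlib

open Filter Topology

set_option maxHeartbeats 2000000 in
/-- Proposition 3.1(1)-(2): for an automorphism `σ` of a finite-dimensional real
Lie algebra `𝔤` (with its canonical vector-space topology; all norms on `𝔤` are
equivalent and induce this topology), the stable set
`𝔣ˢ = {v : σⁿ(v) → 0}` is a Lie subalgebra of `𝔤`, and `𝔣ˢ` is nilpotent as a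
Lie algebra. -/
theorem stmt_4 {𝔤 : Type*} [LieRing 𝔤] [LieAlgebra ℝ 𝔤]
    [TopologicalSpace 𝔤] [IsTopologicalAddGroup 𝔤] [ContinuousSMul ℝ 𝔤] [T2Space 𝔤]
    [FiniteDimensional ℝ 𝔤]
    (σ : 𝔤 ≃ₗ⁅ℝ⁆ 𝔤) :
    ∃ 𝔣 : LieSubalgebra ℝ 𝔤,
      (𝔣 : Set 𝔤) = {v : 𝔤 | Tendsto (fun n : ℕ => (⇑σ)^[n] v) atTop (𝓝 0)} ∧
      LieModule.IsNilpotent 𝔣 𝔣 := by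
  classical
  have hσadd : ∀ v w : 𝔤, σ (v + w) = σ v + σ w := fun v w => σ.toLieHom.map_add v w
  have hσsmul : ∀ (c : ℝ) (v : 𝔤), σ (c • v) = c • σ v := fun c v => σ.toLieHom.map_smul c v
  have hσzero : σ 0 = 0 := σ.toLieHom.map_zero
  -- iterate identities
  have hit_add : ∀ (n : ℕ) (v w : 𝔤), (⇑σ)^[n] (v + w) = (⇑σ)^[n] v + (⇑σ)^[n] w := by
    intro n
    induction n with
    | zero => intro v w; simp
    | succ n ih =>
        intro v w
        rw [Function.iterate_succ_apply, Function.iterate_succ_apply, Function.iterate_succ_apply,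
          hσadd]
        exact ih _ _
  have hit_smul : ∀ (n : ℕ) (c : ℝ) (v : 𝔤), (⇑σ)^[n] (c • v) = c • (⇑σ)^[n] v := by
    intro n
    induction n with
    | zero => intro c v; simp
    | succ n ih =>
        intro c v
        rw [Function.iterate_succ_apply, Function.iterate_succ_apply, hσsmul]
        exact ih _ _
  have hit_zero : ∀ n : ℕ, (⇑σ)^[n] (0 : 𝔤) = 0 := by
    intro n
    induction n with
    | zero => simp
    | succ n ih => rw [Function.iterate_succ_apply, hσzero]; exact ih
  have hit_lie : ∀ (n : ℕ) (v w : 𝔤), (⇑σ)^[n] ⁅v, w⁆ = ⁅(⇑σ)^[n] v, (⇑σ)^[n] w⁆ := by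
    intro n
    induction n with
    | zero => intro v w; simp
    | succ n ih =>
        intro v w
        rw [Function.iterate_succ_apply, Function.iterate_succ_apply,
          Function.iterate_succ_apply, σ.map_lie]
        exact ih _ _
  -- transport to a normed model space
  set E := (Fin (Module.finrank ℝ 𝔤) → ℝ) with hE
  let ℓ : 𝔤 ≃L[ℝ] E := (Module.finBasis ℝ 𝔤).equivFun.toContinuousLinearEquiv
  let σL : 𝔤 ≃L[ℝ] 𝔤 := σ.toLinearEquiv.toContinuousLinearEquiv
  have hσL : ∀ v : 𝔤, σL v = σ v := fun v => rfl
  let Se : E ≃L[ℝ] E := (ℓ.symm.trans σL).trans ℓ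
  let S : E →L[ℝ] E := Se
  have hS : ∀ v : 𝔤, S (ℓ v) = ℓ (σ v) := by
    intro v
    show Se (ℓ v) = ℓ (σ v)
    simp [Se, hσL]
  have hiter : ∀ (n : ℕ) (v : 𝔤), (S ^ n) (ℓ v) = ℓ ((⇑σ)^[n] v) := by
    intro n
    induction n with
    | zero => intro v; simp
    | succ n ih =>
        intro v
        rw [pow_succ', ContinuousLinearMap.mul_apply, ih, hS ((⇑σ)^[n] v),
          ← Function.iterate_succ_apply' (⇑σ) n v]
  -- the bracket as a continuous bilinear map on E
  let β : E →ₗ[ℝ] E →ₗ[ℝ] E := LinearMap.mk₂ ℝ (fun x y => ℓ ⁅ℓ.symm x, ℓ.symm y⁆)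
    (by intro x x' y; simp [add_lie])
    (by intro c x y; simp [smul_lie])
    (by intro x y y'; simp [lie_add])
    (by intro c x y; simp [lie_smul])
  let B : E →L[ℝ] E →L[ℝ] E :=
    LinearMap.toContinuousLinearMap
      ((LinearMap.toContinuousLinearMap :
        (E →ₗ[ℝ] E) ≃ₗ[ℝ] (E →L[ℝ] E)).toLinearMap.comp β)
  have hB : ∀ v w : 𝔤, ℓ ⁅v, w⁆ = B (ℓ v) (ℓ w) := by
    intro v w
    show ℓ ⁅v, w⁆ = LinearMap.toContinuousLinearMap (β (ℓ v)) (ℓ w)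
    simp [β]
  -- membership lemmas for the stable set
  have hmem_add : ∀ {v w : 𝔤}, Tendsto (fun n : ℕ => (⇑σ)^[n] v) atTop (𝓝 0) →
      Tendsto (fun n : ℕ => (⇑σ)^[n] w) atTop (𝓝 0) →
      Tendsto (fun n : ℕ => (⇑σ)^[n] (v + w)) atTop (𝓝 0) := by
    intro v w hv hw
    have := hv.add hw
    rw [add_zero] at this
    exact this.congr fun n => (hit_add n v w).symm
  have hmem_smul : ∀ (c : ℝ) {v : 𝔤}, Tendsto (fun n : ℕ => (⇑σ)^[n] v) atTop (𝓝 0) →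
      Tendsto (fun n : ℕ => (⇑σ)^[n] (c • v)) atTop (𝓝 0) := by
    intro c v hv
    have := hv.const_smul c
    rw [smul_zero] at this
    exact this.congr fun n => (hit_smul n c v).symm
  have hmem_zero : Tendsto (fun n : ℕ => (⇑σ)^[n] (0 : 𝔤)) atTop (𝓝 0) := by
    simp only [hit_zero]
    exact tendsto_const_nhds
  have hmem_lie : ∀ {v w : 𝔤}, Tendsto (fun n : ℕ => (⇑σ)^[n] v) atTop (𝓝 0) →
      Tendsto (fun n : ℕ => (⇑σ)^[n] w) atTop (𝓝 0) →
      Tendsto (fun n : ℕ => (⇑σ)^[n] ⁅v, w⁆) atTop (𝓝 0) := by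
    intro v w hv hw
    have hv' : Tendsto (fun n : ℕ => ℓ ((⇑σ)^[n] v)) atTop (𝓝 0) := by
      have := (ℓ.continuous.tendsto 0).comp hv
      simpa [Function.comp_def] using this
    have hw' : Tendsto (fun n : ℕ => ℓ ((⇑σ)^[n] w)) atTop (𝓝 0) := by
      have := (ℓ.continuous.tendsto 0).comp hw
      simpa [Function.comp_def] using this
    have hpair : Tendsto (fun n : ℕ => (ℓ ((⇑σ)^[n] v), ℓ ((⇑σ)^[n] w)))
        atTop (𝓝 ((0 : E), (0 : E))) := hv'.prodMk_nhds hw'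
    have hBt : Tendsto (fun n : ℕ => B (ℓ ((⇑σ)^[n] v)) (ℓ ((⇑σ)^[n] w))) atTop (𝓝 0) := by
      have h := (B.continuous₂.tendsto ((0 : E), (0 : E))).comp hpair
      simpa [Function.uncurry, Function.comp_def] using h
    have hfin : Tendsto (fun n : ℕ => ℓ.symm (B (ℓ ((⇑σ)^[n] v)) (ℓ ((⇑σ)^[n] w))))
        atTop (𝓝 0) := by
      have := (ℓ.symm.continuous.tendsto 0).comp hBt
      simpa [Function.comp_def] using this
    refine hfin.congr fun n => ?_
    rw [← hB, ℓ.symm_apply_apply, ← hit_lie]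
  -- the stable Lie subalgebra
  refine ⟨{ carrier := {v : 𝔤 | Tendsto (fun n : ℕ => (⇑σ)^[n] v) atTop (𝓝 0)}
            add_mem' := fun hv hw => hmem_add hv hw
            zero_mem' := hmem_zero
            smul_mem' := fun c v hv => hmem_smul c hv
            lie_mem' := fun hv hw => hmem_lie hv hw }, rfl, ?_⟩
  set 𝔣 : LieSubalgebra ℝ 𝔤 :=
    { carrier := {v : 𝔤 | Tendsto (fun n : ℕ => (⇑σ)^[n] v) atTop (𝓝 0)}
      add_mem' := fun hv hw => hmem_add hv hw
      zero_mem' := hmem_zero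
      smul_mem' := fun c v hv => hmem_smul c hv
      lie_mem' := fun hv hw => hmem_lie hv hw } with h𝔣
  -- the image of the stable subalgebra in E
  let W : Submodule ℝ E := 𝔣.toSubmodule.map (ℓ.toLinearEquiv.toLinearMap)
  have hmemW : ∀ {v : 𝔤}, v ∈ 𝔣 → ℓ v ∈ W := fun hv => ⟨_, hv, rfl⟩
  have hWpt : ∀ x : W, Tendsto (fun n : ℕ => (S ^ n) ((x : E))) atTop (𝓝 0) := by
    rintro ⟨x, v, hv, rfl⟩
    have hv' : Tendsto (fun n : ℕ => ℓ ((⇑σ)^[n] v)) atTop (𝓝 0) := by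
      have := (ℓ.continuous.tendsto 0).comp hv
      simpa [Function.comp_def] using this
    exact hv'.congr fun n => (hiter n v).symm
  -- pointwise-to-uniform decay on W
  let bW := Module.finBasis ℝ W
  let coordC : Fin (Module.finrank ℝ W) → (W →L[ℝ] ℝ) :=
    fun i => LinearMap.toContinuousLinearMap (bW.coord i)
  let fn : ℕ → ℝ := fun n => ∑ i, ‖coordC i‖ * ‖(S ^ n) ((bW i : E))‖
  have hfn0 : Tendsto fn atTop (𝓝 0) := by
    have h1 : ∀ i, Tendsto (fun n : ℕ => ‖coordC i‖ * ‖(S ^ n) ((bW i : E))‖) atTop (𝓝 0) := by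
      intro i
      have := ((hWpt (bW i)).norm).const_mul ‖coordC i‖
      simpa using this
    have := tendsto_finset_sum (Finset.univ : Finset (Fin (Module.finrank ℝ W)))
      (fun i _ => h1 i)
    simpa [fn] using this
  have hfn_bound : ∀ (n : ℕ) (x : W), ‖(S ^ n) ((x : E))‖ ≤ fn n * ‖(x : E)‖ := by
    intro n x
    have hxsum : (x : E) = ∑ i, bW.repr x i • (bW i : E) := by
      conv_lhs => rw [← bW.sum_repr x]
      simp only [Submodule.coe_sum, Submodule.coe_smul]
    have hnx : ‖x‖ = ‖(x : E)‖ := rfl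
    calc ‖(S ^ n) ((x : E))‖
        = ‖∑ i, bW.repr x i • (S ^ n) ((bW i : E))‖ := by
          rw [hxsum, map_sum]
          simp [map_smul]
      _ ≤ ∑ i, ‖bW.repr x i • (S ^ n) ((bW i : E))‖ := norm_sum_le _ _
      _ ≤ ∑ i, (‖coordC i‖ * ‖(x : E)‖) * ‖(S ^ n) ((bW i : E))‖ := by
          refine Finset.sum_le_sum fun i _ => ?_
          rw [norm_smul]
          refine mul_le_mul_of_nonneg_right ?_ (norm_nonneg _)
          have h1 : ‖(coordC i) x‖ ≤ ‖coordC i‖ * ‖x‖ := (coordC i).le_opNorm x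
          have h2 : (coordC i) x = bW.repr x i := by
            simp [coordC, Module.Basis.coord_apply]
          rw [h2, hnx] at h1
          exact h1
      _ = fn n * ‖(x : E)‖ := by
          rw [Finset.sum_mul]
          exact Finset.sum_congr rfl fun i _ => by ring
  obtain ⟨N, hN⟩ : ∃ N : ℕ, fn N ≤ 1 / 2 := by
    have : ∀ᶠ n in atTop, fn n < 1 / 2 :=
      hfn0.eventually_lt_const (by norm_num)
    obtain ⟨N, hN⟩ := this.exists
    exact ⟨N, hN.le⟩
  have hstep : ∀ {v : 𝔤}, v ∈ 𝔣 → ‖(S ^ N) (ℓ v)‖ ≤ 1 / 2 * ‖ℓ v‖ := by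
    intro v hv
    have := hfn_bound N ⟨ℓ v, hmemW hv⟩
    exact this.trans (mul_le_mul_of_nonneg_right hN (norm_nonneg _))
  -- membership under σ-iterates
  have hσmem : ∀ {v : 𝔤}, v ∈ 𝔣 → σ v ∈ 𝔣 := by
    intro v hv
    have h1 : Tendsto (fun n : ℕ => (⇑σ)^[n] v) atTop (𝓝 0) := hv
    have h2 := h1.comp (tendsto_add_atTop_nat 1)
    exact h2.congr fun n => by
      simp [Function.comp, Function.iterate_succ_apply]
  have hitmem : ∀ (n : ℕ) {v : 𝔤}, v ∈ 𝔣 → (⇑σ)^[n] v ∈ 𝔣 := by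
    intro n
    induction n with
    | zero => intro v hv; simpa using hv
    | succ n ih =>
        intro v hv
        rw [Function.iterate_succ_apply]
        exact ih (hσmem hv)
  -- uniform exponential decay on 𝔣 along the subsequence (m*N)
  have hF : ∀ (m : ℕ) {v : 𝔤}, v ∈ 𝔣 →
      ‖(S ^ (m * N)) (ℓ v)‖ ≤ (1 / 2 : ℝ) ^ m * ‖ℓ v‖ := by
    intro m
    induction m with
    | zero => intro v hv; simp
    | succ m ih =>
        intro v hv
        have hv' : (⇑σ)^[N] v ∈ 𝔣 := hitmem N hv
        have h1 : (S ^ ((m + 1) * N)) (ℓ v) = (S ^ (m * N)) (ℓ ((⇑σ)^[N] v)) := by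
          rw [add_mul, one_mul, pow_add, ContinuousLinearMap.mul_apply, hiter N v]
        rw [h1]
        calc ‖(S ^ (m * N)) (ℓ ((⇑σ)^[N] v))‖
            ≤ (1 / 2 : ℝ) ^ m * ‖ℓ ((⇑σ)^[N] v)‖ := ih hv'
          _ = (1 / 2 : ℝ) ^ m * ‖(S ^ N) (ℓ v)‖ := by rw [hiter N v]
          _ ≤ (1 / 2 : ℝ) ^ m * (1 / 2 * ‖ℓ v‖) :=
              mul_le_mul_of_nonneg_left (hstep hv) (by positivity)
          _ = (1 / 2 : ℝ) ^ (m + 1) * ‖ℓ v‖ := by ring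
  -- lower bound from the inverse
  let S' : E →L[ℝ] E := Se.symm
  set M : ℝ := max 1 ‖S'‖ with hM
  have hM1 : (1 : ℝ) ≤ M := le_max_left _ _
  have hM0 : (0 : ℝ) < M := lt_of_lt_of_le one_pos hM1
  have hS'S : ∀ x : E, S' (S x) = x := fun x => Se.symm_apply_apply x
  have hlow : ∀ (n : ℕ) (x : E), ‖x‖ ≤ M ^ n * ‖(S ^ n) x‖ := by
    intro n
    induction n with
    | zero => intro x; simp
    | succ n ih =>
        intro x
        have h1 : ‖S x‖ ≤ M ^ n * ‖(S ^ n) (S x)‖ := ih (S x)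
        have h2 : (S ^ n) (S x) = (S ^ (n + 1)) x := by
          rw [pow_succ, ContinuousLinearMap.mul_apply]
        have h3 : ‖x‖ ≤ M * ‖S x‖ := by
          calc ‖x‖ = ‖S' (S x)‖ := by rw [hS'S]
            _ ≤ ‖S'‖ * ‖S x‖ := S'.le_opNorm _
            _ ≤ M * ‖S x‖ := mul_le_mul_of_nonneg_right (le_max_right _ _) (norm_nonneg _)
        calc ‖x‖ ≤ M * ‖S x‖ := h3
          _ ≤ M * (M ^ n * ‖(S ^ n) (S x)‖) :=
              mul_le_mul_of_nonneg_left h1 hM0.le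
          _ = M ^ (n + 1) * ‖(S ^ (n + 1)) x‖ := by rw [h2]; ring
  -- the bracket identity transported
  have hSB : ∀ (n : ℕ) (v w : 𝔤),
      (S ^ n) (ℓ ⁅v, w⁆) = B ((S ^ n) (ℓ v)) ((S ^ n) (ℓ w)) := by
    intro n v w
    calc (S ^ n) (ℓ ⁅v, w⁆) = ℓ ((⇑σ)^[n] ⁅v, w⁆) := hiter n _
      _ = ℓ ⁅(⇑σ)^[n] v, (⇑σ)^[n] w⁆ := by rw [hit_lie]
      _ = B (ℓ ((⇑σ)^[n] v)) (ℓ ((⇑σ)^[n] w)) := hB _ _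
      _ = B ((S ^ n) (ℓ v)) ((S ^ n) (ℓ w)) := by rw [hiter, hiter]
  -- choose the nilpotency index
  obtain ⟨k, hk⟩ : ∃ k : ℕ, M ^ N < 2 ^ k := pow_unbounded_of_one_lt _ one_lt_two
  -- the key vanishing result for iterated brackets
  have hmain : ∀ (x y : 𝔤), x ∈ 𝔣 → y ∈ 𝔣 →
      ((LieAlgebra.ad ℝ 𝔤 x) ^ k) y = 0 := by
    intro x y hx hy
    set w : ℕ → 𝔤 := fun j => ((LieAlgebra.ad ℝ 𝔤 x) ^ j) y with hw
    have hwsucc : ∀ j, w (j + 1) = ⁅x, w j⁆ := by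
      intro j
      simp only [hw, pow_succ', Module.End.mul_apply, LieAlgebra.ad_apply]
    have hwmem : ∀ j, w j ∈ 𝔣 := by
      intro j
      induction j with
      | zero => simpa [hw] using hy
      | succ j ih => rw [hwsucc]; exact hmem_lie hx ih
    set Kb : ℝ := ‖B‖ with hKb
    have hQ : ∀ (j m : ℕ), ‖(S ^ (m * N)) (ℓ (w j))‖ ≤
        (Kb * ‖ℓ x‖) ^ j * ((1 / 2 : ℝ) ^ (m * j) * ((1 / 2 : ℝ) ^ m * ‖ℓ y‖)) := by
      intro j
      induction j with
      | zero =>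
          intro m
          have : w 0 = y := by simp [hw]
          rw [this]
          simpa using hF m hy
      | succ j ih =>
          intro m
          rw [hwsucc j]
          have h1 : (S ^ (m * N)) (ℓ ⁅x, w j⁆) =
              B ((S ^ (m * N)) (ℓ x)) ((S ^ (m * N)) (ℓ (w j))) := hSB _ _ _
          rw [h1]
          have h2 : ‖B ((S ^ (m * N)) (ℓ x)) ((S ^ (m * N)) (ℓ (w j)))‖ ≤
              Kb * ‖(S ^ (m * N)) (ℓ x)‖ * ‖(S ^ (m * N)) (ℓ (w j))‖ := B.le_opNorm₂ _ _
          have h3 : ‖(S ^ (m * N)) (ℓ x)‖ ≤ (1 / 2 : ℝ) ^ m * ‖ℓ x‖ := hF m hx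
          have h4 := ih m
          calc ‖B ((S ^ (m * N)) (ℓ x)) ((S ^ (m * N)) (ℓ (w j)))‖
              ≤ Kb * ‖(S ^ (m * N)) (ℓ x)‖ * ‖(S ^ (m * N)) (ℓ (w j))‖ := h2
            _ ≤ Kb * ((1 / 2 : ℝ) ^ m * ‖ℓ x‖) *
                ((Kb * ‖ℓ x‖) ^ j * ((1 / 2 : ℝ) ^ (m * j) * ((1 / 2 : ℝ) ^ m * ‖ℓ y‖))) := by
                refine mul_le_mul ?_ h4 (norm_nonneg _) (by positivity)
                exact mul_le_mul_of_nonneg_left h3 (norm_nonneg B)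
            _ = (Kb * ‖ℓ x‖) ^ (j + 1) *
                ((1 / 2 : ℝ) ^ (m * (j + 1)) * ((1 / 2 : ℝ) ^ m * ‖ℓ y‖)) := by ring
    -- conclude that w k = 0
    set D : ℝ := (Kb * ‖ℓ x‖) ^ k * ‖ℓ y‖ with hD
    set r : ℝ := M ^ N * (1 / 2 : ℝ) ^ (k + 1) with hr
    have hrange : ∀ m : ℕ, ‖ℓ (w k)‖ ≤ D * r ^ m := by
      intro m
      have h1 := hlow (m * N) (ℓ (w k))
      have h2 := hQ k m
      calc ‖ℓ (w k)‖ ≤ M ^ (m * N) * ‖(S ^ (m * N)) (ℓ (w k))‖ := h1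
        _ ≤ M ^ (m * N) *
            ((Kb * ‖ℓ x‖) ^ k * ((1 / 2 : ℝ) ^ (m * k) * ((1 / 2 : ℝ) ^ m * ‖ℓ y‖))) :=
            mul_le_mul_of_nonneg_left h2 (by positivity)
        _ = D * r ^ m := by
            rw [hD, hr]
            rw [show m * N = N * m from mul_comm m N, pow_mul]
            rw [show ((1 / 2 : ℝ)) ^ (m * k) * ((1 / 2 : ℝ) ^ m * ‖ℓ y‖) =
              ((1 / 2 : ℝ) ^ (k + 1)) ^ m * ‖ℓ y‖ by
                rw [← mul_assoc, ← pow_add, ← pow_mul,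
                  show m * k + m = (k + 1) * m from by ring]]
            ring
    have hr0 : (0 : ℝ) ≤ r := by positivity
    have hr1 : r < 1 := by
      have h2 : M ^ N * (1 / 2 : ℝ) ^ (k + 1) < 2 ^ k * (1 / 2 : ℝ) ^ (k + 1) := by
        refine mul_lt_mul_of_pos_right hk (by positivity)
      have h3 : (2 : ℝ) ^ k * (1 / 2 : ℝ) ^ (k + 1) = 1 / 2 := by
        rw [div_pow, one_pow, pow_succ]
        field_simp
      rw [hr]
      calc M ^ N * (1 / 2 : ℝ) ^ (k + 1) < 2 ^ k * (1 / 2 : ℝ) ^ (k + 1) := h2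
        _ = 1 / 2 := h3
        _ < 1 := by norm_num
    have htend : Tendsto (fun m : ℕ => D * r ^ m) atTop (𝓝 0) := by
      have := (tendsto_pow_atTop_nhds_zero_of_lt_one hr0 hr1).const_mul D
      simpa using this
    have hle0 : ‖ℓ (w k)‖ ≤ 0 := ge_of_tendsto' htend hrange
    have : ℓ (w k) = 0 := norm_le_zero_iff.mp hle0
    have : w k = 0 := by
      have := congrArg ℓ.symm this
      simpa using this
    exact this
  -- Engel's theorem
  haveI : IsNoetherian ℝ 𝔣 := inferInstanceAs (IsNoetherian ℝ 𝔣.toSubmodule)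
  refine (LieAlgebra.isNilpotent_iff_forall (R := ℝ)).mpr ?_
  intro xf
  refine ⟨k, ?_⟩
  ext yf
  have hco : ∀ (j : ℕ) (a b : 𝔣),
      ((((LieAlgebra.ad ℝ 𝔣 a) ^ j) b : 𝔣) : 𝔤) = ((LieAlgebra.ad ℝ 𝔤 (a : 𝔤)) ^ j) (b : 𝔤) := by
    intro j
    induction j with
    | zero => intro a b; simp
    | succ j ih =>
        intro a b
        rw [pow_succ, pow_succ, Module.End.mul_apply, Module.End.mul_apply,
          LieAlgebra.ad_apply, LieAlgebra.ad_apply, ih a ⁅a, b⁆]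
        simp
  have h1 : ((((LieAlgebra.ad ℝ 𝔣 xf) ^ k) yf : 𝔣) : 𝔤) = 0 := by
    rw [hco]
    exact hmain (xf : 𝔤) (yf : 𝔤) xf.2 yf.2
  simpa using h1
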